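/- Let L be a symmetric positive definite m×m real matrix, D := diag(√L_11,…,√L_mm), and R := D^{-1} L D^{-1} the correlation matrix of L (so R is symmetric positive definite with unit diagonal). For every subset J ⊆ {1,…,m} with |J| ≥ 2 define θ^J := ∑_{J' ⊆ J} (−1)^{|J|−|J'|} · log det(R_{J'}). Then: (i) for every subset A ⊆ {1,…,m}, log det(R_A) = ∑_{J ⊆ A, |J| ≥ 2} θ^J (in particular θ satisfies the recursion θ^{I} = log det(R_I) − ∑_{J ⊊ I, |J| ≥ 2} θ^J, and θ^{{a,b}} = log(1 − R_{ab}²) for pairs); and (ii) for every subset A ⊆ {1,…,m}, P_L(A) = exp( ∑_{i∈A} log L_{ii} + ∑_{J ⊆ A, |J| ≥ 2} θ^J − log det(L + I) ). Thus the determinantal point process is embedded in the exponential family of log-linear models, with canonical interaction parameters θ^J (|J| ≥ 2) determined by L only through its correlation matrix R. -/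

import Mathlib

/-- The determinant of the principal submatrix of `M` with rows and columns in `A`
(equal to `1` when `A = ∅`). -/
noncomputable def pminor {m : ℕ} (M : Matrix (Fin m) (Fin m) ℝ) (A : Finset (Fin m)) : ℝ :=
  (M.submatrix (fun i : A => (i : Fin m)) (fun j : A => (j : Fin m))).det

/-- The `L`-ensemble determinantal point process. -/
noncomputable def dppP {m : ℕ} (L : Matrix (Fin m) (Fin m) ℝ) (A : Finset (Fin m)) : ℝ :=
  pminor L A / (L + 1).det

/-- The canonical interaction parameters `θ^J` of the log-linear embedding,
defined by Möbius inversion from the log principal minors of `R`. -/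
noncomputable def thetaParam {m : ℕ} (R : Matrix (Fin m) (Fin m) ℝ) (J : Finset (Fin m)) : ℝ :=
  ∑ J' ∈ J.powerset, (-1 : ℝ) ^ (J.card - J'.card) * Real.log (pminor R J')

open Finset Matrix

/- ### Auxiliary lemmas -/

lemma pminor_eq_det {m k : ℕ} (M : Matrix (Fin m) (Fin m) ℝ) (A : Finset (Fin m))
    (h : A.card = k) :
    pminor M A = (M.submatrix (fun i : Fin k => ((A.orderIsoOfFin h i : A) : Fin m))
      (fun j : Fin k => ((A.orderIsoOfFin h j : A) : Fin m))).det := by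
  rw [pminor, ← Matrix.det_submatrix_equiv_self (A.orderIsoOfFin h).toEquiv,
    Matrix.submatrix_submatrix]
  rfl

lemma pminor_empty {m : ℕ} (M : Matrix (Fin m) (Fin m) ℝ) : pminor M ∅ = 1 := by
  rw [pminor_eq_det M ∅ Finset.card_empty, Matrix.det_fin_zero]

lemma pminor_singleton {m : ℕ} (M : Matrix (Fin m) (Fin m) ℝ) (a : Fin m) :
    pminor M {a} = M a a := by
  rw [pminor_eq_det M {a} (Finset.card_singleton a), Matrix.det_fin_one]
  have := (({a} : Finset (Fin m)).orderIsoOfFin (Finset.card_singleton a) 0).2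
  rw [Finset.mem_singleton] at this
  simp [this]

lemma pminor_pair {m : ℕ} (M : Matrix (Fin m) (Fin m) ℝ) {a b : Fin m} (hab : a ≠ b) :
    pminor M {a, b} = M a a * M b b - M a b * M b a := by
  have hc : ({a, b} : Finset (Fin m)).card = 2 := Finset.card_pair hab
  rw [pminor_eq_det M {a, b} hc, Matrix.det_fin_two]
  set e := ({a, b} : Finset (Fin m)).orderIsoOfFin hc with he
  have h0 : (e 0 : Fin m) = a ∨ (e 0 : Fin m) = b := by
    have := (e 0).2; rw [Finset.mem_insert, Finset.mem_singleton] at this; exact this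
  have h1 : (e 1 : Fin m) = a ∨ (e 1 : Fin m) = b := by
    have := (e 1).2; rw [Finset.mem_insert, Finset.mem_singleton] at this; exact this
  have hne : (e 0 : Fin m) ≠ (e 1 : Fin m) := by
    intro h
    have : e 0 = e 1 := Subtype.ext h
    exact (by decide : (0 : Fin 2) ≠ 1) (e.injective this)
  rcases h0 with h0 | h0 <;> rcases h1 with h1 | h1 <;>
    simp only [Matrix.submatrix_apply, h0, h1] at hne ⊢ <;>
    first | (exact absurd rfl hne) | ring

lemma posDef_submatrix {m : ℕ} {M : Matrix (Fin m) (Fin m) ℝ} (hM : M.PosDef)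
    {ι : Type*} [Fintype ι] [DecidableEq ι] (f : ι → Fin m) (hf : Function.Injective f) :
    (M.submatrix f f).PosDef := by
  refine Matrix.PosDef.of_dotProduct_mulVec_pos ?_ ?_
  · have h := hM.isHermitian
    rw [Matrix.IsHermitian, Matrix.conjTranspose_submatrix, h.eq]
  · intro x hx
    set y : Fin m → ℝ := Function.extend f x 0 with hy
    have hyf : ∀ i, y (f i) = x i := fun i => hf.extend_apply x 0 i
    have hy0 : ∀ a, a ∉ Set.range f → y a = 0 := by
      intro a ha
      rw [hy, Function.extend_apply' _ _ _ ha]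
      rfl
    have key : ∀ g : Fin m → ℝ, (∀ a, a ∉ Set.range f → g a = 0) →
        ∑ a, g a = ∑ i, g (f i) := by
      intro g hg
      rw [← Finset.sum_image (fun i _ j _ h => hf h)]
      refine (Finset.sum_subset (Finset.subset_univ _) fun a _ ha => hg a ?_).symm
      intro ⟨i, hi⟩
      exact ha (Finset.mem_image.mpr ⟨i, Finset.mem_univ i, hi⟩)
    have hyne : y ≠ 0 := by
      intro h
      apply hx
      funext i
      have := congrFun h (f i)
      rwa [hyf] at this
    have := hM.dotProduct_mulVec_pos hyne
    simp only [star_trivial] at this ⊢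
    convert this using 1
    show ∑ i, x i * (M.submatrix f f *ᵥ x) i = ∑ a, y a * (M *ᵥ y) a
    rw [key (fun a => y a * (M *ᵥ y) a) (fun a ha => by simp only [hy0 a ha, zero_mul])]
    refine Finset.sum_congr rfl fun i _ => ?_
    rw [hyf]
    congr 1
    simp only [Matrix.mulVec, dotProduct, Matrix.submatrix_apply]
    rw [key (fun b => M (f i) b * y b) (fun b hb => by simp only [hy0 b hb, mul_zero])]
    exact Finset.sum_congr rfl fun j _ => by rw [hyf]

lemma sum_neg_one_pow_real {α : Type*} [DecidableEq α] (A : Finset α) :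
    ∑ K ∈ A.powerset, (-1 : ℝ) ^ K.card = if A = ∅ then 1 else 0 := by
  have h := @Finset.sum_powerset_neg_one_pow_card α _ A
  have h2 : ((∑ K ∈ A.powerset, (-1 : ℤ) ^ K.card : ℤ) : ℝ)
      = ∑ K ∈ A.powerset, (-1 : ℝ) ^ K.card := by push_cast; rfl
  rw [← h2, h]
  split <;> norm_num

lemma inner_sum_eq {α : Type*} [DecidableEq α] (A K : Finset α) (hK : K ⊆ A) :
    ∑ J ∈ A.powerset.filter (fun J => K ⊆ J), (-1 : ℝ) ^ (J.card - K.card)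
      = if K = A then 1 else 0 := by
  have : ∑ J ∈ A.powerset.filter (fun J => K ⊆ J), (-1 : ℝ) ^ (J.card - K.card)
      = ∑ T ∈ (A \ K).powerset, (-1 : ℝ) ^ T.card := by
    refine Finset.sum_nbij' (fun J => J \ K) (fun T => T ∪ K) ?_ ?_ ?_ ?_ ?_
    · intro J hJ
      simp only [Finset.mem_filter, Finset.mem_powerset] at hJ ⊢
      exact Finset.sdiff_subset_sdiff hJ.1 Finset.Subset.rfl
    · intro T hT
      simp only [Finset.mem_powerset] at hT
      simp only [Finset.mem_filter, Finset.mem_powerset]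
      exact ⟨Finset.union_subset (hT.trans (Finset.sdiff_subset)) hK, Finset.subset_union_right⟩
    · intro J hJ
      simp only [Finset.mem_filter, Finset.mem_powerset] at hJ
      exact Finset.sdiff_union_of_subset hJ.2
    · intro T hT
      simp only [Finset.mem_powerset] at hT
      have hd : Disjoint T K := Finset.disjoint_of_subset_left hT Finset.sdiff_disjoint
      show (T ∪ K) \ K = T
      rw [Finset.union_sdiff_distrib, Finset.sdiff_self, Finset.union_empty,
        Finset.sdiff_eq_self_of_disjoint hd]
    · intro J hJ
      simp only [Finset.mem_filter, Finset.mem_powerset] at hJ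
      rw [Finset.card_sdiff_of_subset hJ.2]
  rw [this, sum_neg_one_pow_real]
  by_cases h : K = A
  · rw [if_pos h, if_pos (by rw [h, Finset.sdiff_self])]
  · rw [if_neg h, if_neg]
    intro he
    exact h (Finset.Subset.antisymm hK (Finset.sdiff_eq_empty_iff_subset.mp he))

lemma mobius_powerset {α : Type*} [DecidableEq α] (g : Finset α → ℝ) (A : Finset α) :
    ∑ J ∈ A.powerset, ∑ K ∈ J.powerset, (-1 : ℝ) ^ (J.card - K.card) * g K = g A := by
  have step1 : ∀ J ∈ A.powerset,
      ∑ K ∈ J.powerset, (-1 : ℝ) ^ (J.card - K.card) * g K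
      = ∑ K ∈ A.powerset, if K ⊆ J then (-1 : ℝ) ^ (J.card - K.card) * g K else 0 := by
    intro J hJ
    rw [Finset.mem_powerset] at hJ
    rw [← Finset.sum_filter]
    congr 1
    ext K
    simp only [Finset.mem_filter, Finset.mem_powerset]
    exact ⟨fun h => ⟨h.trans hJ, h⟩, fun h => h.2⟩
  rw [Finset.sum_congr rfl step1, Finset.sum_comm]
  have step2 : ∀ K ∈ A.powerset,
      ∑ J ∈ A.powerset, (if K ⊆ J then (-1 : ℝ) ^ (J.card - K.card) * g K else 0)
      = g K * (if K = A then 1 else 0) := by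
    intro K hK
    rw [Finset.mem_powerset] at hK
    rw [← Finset.sum_filter, ← inner_sum_eq A K hK, Finset.mul_sum]
    exact Finset.sum_congr rfl fun J _ => mul_comm _ _
  rw [Finset.sum_congr rfl step2]
  rw [Finset.sum_eq_single A (fun K _ hKA => by rw [if_neg hKA, mul_zero])
    (fun h => absurd (Finset.mem_powerset_self A) h), if_pos rfl, mul_one]

theorem dpp_loglinear_embedding (m : ℕ) (L : Matrix (Fin m) (Fin m) ℝ)
    (hsymm : L.IsSymm) (hL : L.PosDef)
    (D R : Matrix (Fin m) (Fin m) ℝ)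
    (hD : D = Matrix.diagonal (fun i => Real.sqrt (L i i)))
    (hR : R = D⁻¹ * L * D⁻¹) :
    (∀ A : Finset (Fin m),
      Real.log (pminor R A)
        = ∑ J ∈ A.powerset.filter (fun J => 2 ≤ J.card), thetaParam R J) ∧
    (∀ I : Finset (Fin m), 2 ≤ I.card →
      thetaParam R I
        = Real.log (pminor R I)
          - ∑ J ∈ (I.powerset.filter (fun J => 2 ≤ J.card)).erase I, thetaParam R J) ∧
    (∀ a b : Fin m, a ≠ b → thetaParam R {a, b} = Real.log (1 - (R a b) ^ 2)) ∧
    (∀ A : Finset (Fin m),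
      dppP L A
        = Real.exp ((∑ i ∈ A, Real.log (L i i))
            + (∑ J ∈ A.powerset.filter (fun J => 2 ≤ J.card), thetaParam R J)
            - Real.log (L + 1).det)) := by
  -- basic positivity of the diagonal of `L`
  have hd : ∀ i, 0 < L i i := by
    intro i
    have h1 : (Pi.single i 1 : Fin m → ℝ) ≠ 0 := by
      intro h
      have := congrFun h i
      simp at this
    have := hL.dotProduct_mulVec_pos h1
    simpa [dotProduct, Matrix.mulVec, Pi.single_apply, Finset.sum_ite_eq',
      mul_comm] using this
  set d : Fin m → ℝ := fun i => Real.sqrt (L i i) with hdd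
  have hdpos : ∀ i, 0 < d i := fun i => Real.sqrt_pos.mpr (hd i)
  have hdne : ∀ i, d i ≠ 0 := fun i => (hdpos i).ne'
  have hdsq : ∀ i, d i * d i = L i i := fun i => Real.mul_self_sqrt (hd i).le
  -- inverse of `D`
  have hDinv : D⁻¹ = Matrix.diagonal (fun i => (d i)⁻¹) := by
    apply Matrix.inv_eq_right_inv
    rw [hD, Matrix.diagonal_mul_diagonal, ← Matrix.diagonal_one]
    rw [show (fun i => d i * (d i)⁻¹) = fun _ => (1:ℝ) from funext fun i => mul_inv_cancel₀ (hdne i)]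
  -- entrywise formulas
  have hRij : ∀ i j, R i j = (d i)⁻¹ * L i j * (d j)⁻¹ := by
    intro i j
    rw [hR, hDinv, Matrix.mul_diagonal, Matrix.diagonal_mul]
  have hLij : ∀ i j, L i j = d i * R i j * d j := by
    intro i j
    rw [hRij i j,
      show d i * ((d i)⁻¹ * L i j * (d j)⁻¹) * d j
        = (d i * (d i)⁻¹) * L i j * ((d j)⁻¹ * d j) by ring,
      mul_inv_cancel₀ (hdne i), inv_mul_cancel₀ (hdne j), one_mul, mul_one]
  have hRdiag : ∀ i, R i i = 1 := by
    intro i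
    rw [hRij i i, ← hdsq i, mul_comm (d i) (d i)]
    rw [show (d i)⁻¹ * (d i * d i) * (d i)⁻¹ = ((d i)⁻¹ * d i) * (d i * (d i)⁻¹) by ring,
      inv_mul_cancel₀ (hdne i), mul_inv_cancel₀ (hdne i), one_mul]
  have hRsymm : ∀ i j, R j i = R i j := by
    intro i j
    rw [hRij, hRij, hsymm.apply i j]
    ring
  -- factorization of principal minors
  have hfact : ∀ A : Finset (Fin m), pminor L A = (∏ i ∈ A, L i i) * pminor R A := by
    intro A
    have hsub : L.submatrix (fun i : A => (i : Fin m)) (fun j : A => (j : Fin m))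
        = Matrix.diagonal (fun i : A => d i) *
          R.submatrix (fun i : A => (i : Fin m)) (fun j : A => (j : Fin m)) *
          Matrix.diagonal (fun i : A => d i) := by
      ext i j
      rw [Matrix.mul_diagonal, Matrix.diagonal_mul, Matrix.submatrix_apply,
        Matrix.submatrix_apply]
      exact hLij i j
    rw [pminor, hsub, Matrix.det_mul, Matrix.det_mul, Matrix.det_diagonal]
    rw [show (∏ i : A, d i) * (R.submatrix _ _).det * (∏ i : A, d i)
        = ((∏ i : A, d i) * (∏ i : A, d i)) * (R.submatrix _ _).det by ring,
      ← Finset.prod_mul_distrib]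
    congr 1
    rw [Finset.prod_coe_sort A (fun i => d i * d i)]
    exact Finset.prod_congr rfl fun i _ => hdsq i
  have hLpos : ∀ A : Finset (Fin m), 0 < pminor L A := by
    intro A
    exact (posDef_submatrix hL (fun i : A => (i : Fin m)) Subtype.coe_injective).det_pos
  have hRpos : ∀ A : Finset (Fin m), 0 < pminor R A := by
    intro A
    have h1 := hLpos A
    rw [hfact A] at h1
    have h2 : 0 < ∏ i ∈ A, L i i := Finset.prod_pos fun i _ => hd i
    nlinarith
  -- Möbius inversion
  have htheta_sum : ∀ A : Finset (Fin m),
      ∑ J ∈ A.powerset, thetaParam R J = Real.log (pminor R A) := by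
    intro A
    simp only [thetaParam]
    exact mobius_powerset (fun K => Real.log (pminor R K)) A
  have htheta_small : ∀ J : Finset (Fin m), J.card < 2 → thetaParam R J = 0 := by
    intro J hJ
    interval_cases h : J.card
    · rw [Finset.card_eq_zero] at h
      subst h
      simp [thetaParam, pminor_empty]
    · rw [Finset.card_eq_one] at h
      obtain ⟨a, rfl⟩ := h
      have hps : ({a} : Finset (Fin m)).powerset = {∅, {a}} := by
        ext J
        simp [Finset.subset_singleton_iff]
      rw [thetaParam, hps, Finset.sum_pair (Finset.singleton_ne_empty a).symm]
      simp [pminor_empty, pminor_singleton, hRdiag]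
  -- part (i)
  have part1 : ∀ A : Finset (Fin m),
      Real.log (pminor R A)
        = ∑ J ∈ A.powerset.filter (fun J => 2 ≤ J.card), thetaParam R J := by
    intro A
    have h1 := htheta_sum A
    rw [← Finset.sum_filter_add_sum_filter_not A.powerset (fun J => 2 ≤ J.card)] at h1
    have h2 : ∑ J ∈ A.powerset.filter (fun J => ¬ 2 ≤ J.card), thetaParam R J = 0 :=
      Finset.sum_eq_zero fun J hJ =>
        htheta_small J (Nat.lt_of_not_le (Finset.mem_filter.mp hJ).2)
    rw [h2, add_zero] at h1
    exact h1.symm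
  refine ⟨part1, ?_, ?_, ?_⟩
  -- part (ii)
  · intro I hI
    have hImem : I ∈ I.powerset.filter (fun J => 2 ≤ J.card) :=
      Finset.mem_filter.mpr ⟨Finset.mem_powerset_self I, hI⟩
    have h1 := part1 I
    rw [← Finset.add_sum_erase _ _ hImem] at h1
    linarith
  -- part (iii)
  · intro a b hab
    have hfilter : ({a, b} : Finset (Fin m)).powerset.filter (fun J => 2 ≤ J.card)
        = {({a, b} : Finset (Fin m))} := by
      ext J
      simp only [Finset.mem_filter, Finset.mem_powerset, Finset.mem_singleton]
      constructor
      · rintro ⟨hsub, hcard⟩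
        exact Finset.eq_of_subset_of_card_le hsub (by rw [Finset.card_pair hab]; exact hcard)
      · rintro rfl
        exact ⟨Finset.Subset.rfl, le_of_eq (Finset.card_pair hab).symm⟩
    have h1 := part1 {a, b}
    rw [hfilter, Finset.sum_singleton] at h1
    rw [← h1, pminor_pair R hab, hRdiag, hRdiag, hRsymm a b]
    ring_nf
  -- part (iv)
  · intro A
    have hdet : 0 < (L + 1).det :=
      (hL.add_posSemidef (Matrix.PosDef.one).posSemidef).det_pos
    have hprod : 0 < ∏ i ∈ A, L i i := Finset.prod_pos fun i _ => hd i
    rw [dppP, Real.exp_sub, Real.exp_add, Real.exp_sum, Real.exp_log hdet, ← part1 A,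
      Real.exp_log (hRpos A), hfact A]
    congr 1
    congr 1
    exact Finset.prod_congr rfl fun i _ => (Real.exp_log (hd i)).symm
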